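/- Let |ψ_±⟩ be unit vectors and ρ_± density matrices in finite-dimensional Hilbert spaces. If a completely positive trace-non-increasing map E satisfies E(|ψ_±⟩⟨ψ_±|) = p_± ρ_± with p_± > 0 and F(ρ_+,ρ_−) < |⟨ψ_+|ψ_−⟩|, then min{p_+, p_−} ≤ (1 − |⟨ψ_+|ψ_−⟩|)/(1 − F(ρ_+, ρ_−)). -/

import Mathlib

open Matrix Set
open scoped ComplexOrder

/-- Square root of a positive semidefinite matrix (junk value `0` otherwise). -/
noncomputable def msqrt {n : Type*} [Fintype n] [DecidableEq n] (A : Matrix n n ℂ) :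
    Matrix n n ℂ :=
  open scoped Classical in
  if h : A.PosSemidef then
    (h.1.eigenvectorUnitary : Matrix n n ℂ) * diagonal ((↑) ∘ Real.sqrt ∘ h.1.eigenvalues) *
      (star h.1.eigenvectorUnitary : Matrix n n ℂ)
  else 0

/-- Uhlmann fidelity `F(ρ,σ) = Tr √(√ρ σ √ρ)`. -/
noncomputable def fid {n : Type*} [Fintype n] [DecidableEq n] (ρ σ : Matrix n n ℂ) : ℝ :=
  (msqrt (msqrt ρ * σ * msqrt ρ)).trace.re

/-- The rank-one projector `|φ⟩⟨φ|` as a matrix. -/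
noncomputable def outer {n : Type*} (φ : n → ℂ) : Matrix n n ℂ := Matrix.of fun i j => φ i * star (φ j)

/-- The inner product `⟨φ|ψ⟩`. -/
noncomputable def dot {n : Type*} [Fintype n] (φ ψ : n → ℂ) : ℂ := ∑ i, star (φ i) * ψ i

/-- The Choi matrix of a linear map on matrices. -/
noncomputable def choi {n : Type*} [Fintype n] [DecidableEq n]
    (E : Matrix n n ℂ →ₗ[ℂ] Matrix n n ℂ) : Matrix (n × n) (n × n) ℂ :=
  Matrix.of fun p q => (E (Matrix.single p.1 q.1 1)) p.2 q.2

/-- A quantum operation: a completely positive (positive semidefinite Choi matrix)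
trace-non-increasing linear map on matrices. -/
def IsQuantumOp {n : Type*} [Fintype n] [DecidableEq n]
    (E : Matrix n n ℂ →ₗ[ℂ] Matrix n n ℂ) : Prop :=
  (choi E).PosSemidef ∧ ∀ ρ : Matrix n n ℂ, ρ.PosSemidef → (E ρ).trace.re ≤ ρ.trace.re



section msqrtBasics
variable {n : Type*} [Fintype n] [DecidableEq n] {A B : Matrix n n ℂ}

lemma msqrt_of_psd (h : A.PosSemidef) : msqrt A =
    (h.1.eigenvectorUnitary : Matrix n n ℂ) * diagonal ((↑) ∘ Real.sqrt ∘ h.1.eigenvalues) *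
      (star h.1.eigenvectorUnitary : Matrix n n ℂ) := dif_pos h

lemma msqrt_posSemidef (h : A.PosSemidef) : (msqrt A).PosSemidef := by
  rw [msqrt_of_psd h, star_eq_conjTranspose]
  exact (Matrix.PosSemidef.diagonal (fun i => by
    rw [Complex.le_def]
    simp [Real.sqrt_nonneg])).mul_mul_conjTranspose_same _

lemma msqrt_mul_self (h : A.PosSemidef) : msqrt A * msqrt A = A := by
  have hu : (star (h.1.eigenvectorUnitary : Matrix n n ℂ)) * (h.1.eigenvectorUnitary : Matrix n n ℂ) = 1 :=
    (Matrix.mem_unitaryGroup_iff').mp (h.1.eigenvectorUnitary).2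
  rw [msqrt_of_psd h]
  conv_rhs => rw [h.1.spectral_theorem]
  rw [Unitary.conjStarAlgAut_apply]
  calc _ = (h.1.eigenvectorUnitary : Matrix n n ℂ) * diagonal ((↑) ∘ Real.sqrt ∘ h.1.eigenvalues) *
        ((star (h.1.eigenvectorUnitary : Matrix n n ℂ)) * (h.1.eigenvectorUnitary : Matrix n n ℂ)) *
        (diagonal ((↑) ∘ Real.sqrt ∘ h.1.eigenvalues) * (star (h.1.eigenvectorUnitary : Matrix n n ℂ))) := by
          simp only [mul_assoc]
    _ = _ := by
        rw [hu, mul_one, ← mul_assoc, mul_assoc _ (Matrix.diagonal _) (Matrix.diagonal _), diagonal_mul_diagonal]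
        congr 3
        funext i
        show ((Real.sqrt (h.1.eigenvalues i) : ℂ)) * (Real.sqrt (h.1.eigenvalues i) : ℂ)
          = ((h.1.eigenvalues i : ℝ) : ℂ)
        rw [← Complex.ofReal_mul, Real.mul_self_sqrt (h.eigenvalues_nonneg i)]

lemma msqrt_herm (h : A.PosSemidef) : (msqrt A)ᴴ = msqrt A := (msqrt_posSemidef h).1

end msqrtBasics

section CS
variable {m : Type*} [Fintype m]

lemma cs_dot (v w : m → ℂ) :
    ‖star v ⬝ᵥ w‖ ≤
      Real.sqrt (∑ i, Complex.normSq (v i)) * Real.sqrt (∑ i, Complex.normSq (w i)) := by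
  let v' : EuclideanSpace ℂ m := (WithLp.equiv 2 (m → ℂ)).symm v
  let w' : EuclideanSpace ℂ m := (WithLp.equiv 2 (m → ℂ)).symm w
  have h1 : (inner ℂ v' w' : ℂ) = star v ⬝ᵥ w := by
    rw [EuclideanSpace.inner_eq_star_dotProduct, dotProduct_comm]
    rfl
  have h2 : ‖v'‖ = Real.sqrt (∑ i, Complex.normSq (v i)) := by
    rw [EuclideanSpace.norm_eq]; congr 1
    exact Finset.sum_congr rfl fun i _ => Complex.sq_norm (v i)
  have h3 : ‖w'‖ = Real.sqrt (∑ i, Complex.normSq (w i)) := by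
    rw [EuclideanSpace.norm_eq]; congr 1
    exact Finset.sum_congr rfl fun i _ => Complex.sq_norm (w i)
  calc ‖star v ⬝ᵥ w‖ = ‖(inner ℂ v' w' : ℂ)‖ := by rw [h1]
    _ ≤ ‖v'‖ * ‖w'‖ := norm_inner_le_norm v' w'
    _ = _ := by rw [h2, h3]

lemma star_dot_self (v : m → ℂ) :
    star v ⬝ᵥ v = ((∑ i, Complex.normSq (v i) : ℝ) : ℂ) := by
  simp only [dotProduct, Pi.star_apply]
  push_cast
  exact Finset.sum_congr rfl fun i _ => (Complex.normSq_eq_conj_mul_self (z := v i)).symm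

end CS

section IsCon
variable {a b c : Type*} [Fintype a] [Fintype b] [Fintype c]

/-- `Y` is a contraction. -/
def IsCon (Y : Matrix a b ℂ) : Prop :=
  ∀ v : b → ℂ, ∑ i, Complex.normSq ((Y *ᵥ v) i) ≤ ∑ i, Complex.normSq (v i)

lemma quadform_eq (Y : Matrix a b ℂ) (v : b → ℂ) :
    star v ⬝ᵥ ((Yᴴ * Y) *ᵥ v) = ((∑ i, Complex.normSq ((Y *ᵥ v) i) : ℝ) : ℂ) := by
  rw [← mulVec_mulVec, dotProduct_mulVec, ← star_mulVec]
  exact star_dot_self _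

lemma con_of_psd {Y : Matrix a b ℂ} [DecidableEq b] (h : (1 - Yᴴ * Y).PosSemidef) : IsCon Y := by
  intro v
  have h2 := h.dotProduct_mulVec_nonneg v
  rw [sub_mulVec, dotProduct_sub, one_mulVec, quadform_eq, star_dot_self] at h2
  have := Complex.le_def.mp h2
  simp only [Complex.zero_re, Complex.sub_re, Complex.ofReal_re] at this
  linarith [this.1]

lemma con_mul {Y : Matrix a b ℂ} {Z : Matrix b c ℂ} (hY : IsCon Y) (hZ : IsCon Z) :
    IsCon (Y * Z) := fun v => by
  rw [← mulVec_mulVec]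
  exact le_trans (hY (Z *ᵥ v)) (hZ v)

lemma con_conjTranspose {Y : Matrix a b ℂ} (hY : IsCon Y) : IsCon Yᴴ := by
  intro w
  set t := Real.sqrt (∑ i, Complex.normSq ((Yᴴ *ᵥ w) i)) with ht
  have htnn : 0 ≤ t := Real.sqrt_nonneg _
  have hsq : t * t = ∑ i, Complex.normSq ((Yᴴ *ᵥ w) i) :=
    Real.mul_self_sqrt (Finset.sum_nonneg fun i _ => Complex.normSq_nonneg _)
  have key : t * t ≤ Real.sqrt (∑ i, Complex.normSq (w i)) * t := by
    have e1 : ((∑ i, Complex.normSq ((Yᴴ *ᵥ w) i) : ℝ) : ℂ)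
        = star w ⬝ᵥ (Y *ᵥ (Yᴴ *ᵥ w)) := by
      rw [← star_dot_self (Yᴴ *ᵥ w)]
      rw [star_mulVec, ← dotProduct_mulVec, conjTranspose_conjTranspose]
    have e2 : ‖star w ⬝ᵥ (Y *ᵥ (Yᴴ *ᵥ w))‖
        ≤ Real.sqrt (∑ i, Complex.normSq (w i)) * Real.sqrt (∑ i, Complex.normSq ((Y *ᵥ (Yᴴ *ᵥ w)) i)) :=
      cs_dot _ _
    have e3 : Real.sqrt (∑ i, Complex.normSq ((Y *ᵥ (Yᴴ *ᵥ w)) i)) ≤ t :=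
      Real.sqrt_le_sqrt (hY (Yᴴ *ᵥ w))
    calc t * t = ‖((∑ i, Complex.normSq ((Yᴴ *ᵥ w) i) : ℝ) : ℂ)‖ := by
          rw [Complex.norm_real, Real.norm_eq_abs, ← hsq, abs_of_nonneg (mul_self_nonneg t)]
      _ = ‖star w ⬝ᵥ (Y *ᵥ (Yᴴ *ᵥ w))‖ := by rw [e1]
      _ ≤ _ := e2.trans (by
          have : (0:ℝ) ≤ Real.sqrt (∑ i, Complex.normSq (w i)) := Real.sqrt_nonneg _
          exact mul_le_mul_of_nonneg_left e3 this)
  have ht_le : t ≤ Real.sqrt (∑ i, Complex.normSq (w i)) := by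
    rcases eq_or_lt_of_le htnn with h0 | h0
    · rw [← h0]; exact Real.sqrt_nonneg _
    · exact le_of_mul_le_mul_right (by linarith [key]) h0
  calc ∑ i, Complex.normSq ((Yᴴ *ᵥ w) i) = t * t := hsq.symm
    _ ≤ Real.sqrt (∑ i, Complex.normSq (w i)) * Real.sqrt (∑ i, Complex.normSq (w i)) :=
        mul_le_mul ht_le ht_le htnn (Real.sqrt_nonneg _)
    _ = ∑ i, Complex.normSq (w i) :=
        Real.mul_self_sqrt (Finset.sum_nonneg fun i _ => Complex.normSq_nonneg _)

end IsCon

section Phi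
variable {n : Type*} [Fintype n] [DecidableEq n] {ρ : Matrix n n ℂ}

noncomputable def Phi (hρ : ρ.IsHermitian) (f : ℝ → ℝ) : Matrix n n ℂ :=
  (hρ.eigenvectorUnitary : Matrix n n ℂ) * diagonal (fun i => (f (hρ.eigenvalues i) : ℂ)) *
    (star (hρ.eigenvectorUnitary : Matrix n n ℂ))

lemma Phi_ext (hρ : ρ.IsHermitian) {f g : ℝ → ℝ}
    (h : ∀ i, f (hρ.eigenvalues i) = g (hρ.eigenvalues i)) : Phi hρ f = Phi hρ g := by
  unfold Phi
  have : (fun i => (f (hρ.eigenvalues i) : ℂ)) = (fun i => (g (hρ.eigenvalues i) : ℂ)) := by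
    funext i; rw [h i]
  rw [this]

lemma Phi_mul (hρ : ρ.IsHermitian) (f g : ℝ → ℝ) :
    Phi hρ f * Phi hρ g = Phi hρ (fun x => f x * g x) := by
  unfold Phi
  have hu : (star (hρ.eigenvectorUnitary : Matrix n n ℂ)) * (hρ.eigenvectorUnitary : Matrix n n ℂ) = 1 :=
    (Matrix.mem_unitaryGroup_iff').mp (hρ.eigenvectorUnitary).2
  have hd : diagonal (fun i => (f (hρ.eigenvalues i) : ℂ)) * diagonal (fun i => (g (hρ.eigenvalues i) : ℂ))
      = diagonal (fun i => ((f (hρ.eigenvalues i) * g (hρ.eigenvalues i) : ℝ) : ℂ)) := by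
    rw [diagonal_mul_diagonal]
    congr 1; funext i; push_cast; ring
  calc _ = (hρ.eigenvectorUnitary : Matrix n n ℂ) * diagonal (fun i => (f (hρ.eigenvalues i) : ℂ)) *
      ((star (hρ.eigenvectorUnitary : Matrix n n ℂ)) * (hρ.eigenvectorUnitary : Matrix n n ℂ)) *
      (diagonal (fun i => (g (hρ.eigenvalues i) : ℂ)) * (star (hρ.eigenvectorUnitary : Matrix n n ℂ))) := by
        simp only [mul_assoc]
    _ = _ := by
        rw [hu, mul_one, Matrix.mul_assoc,
          ← Matrix.mul_assoc (diagonal fun i => (f (hρ.eigenvalues i) : ℂ))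
            (diagonal fun i => (g (hρ.eigenvalues i) : ℂ)) _, hd, ← Matrix.mul_assoc]

lemma Phi_id (hρ : ρ.IsHermitian) : Phi hρ (fun x => x) = ρ := by
  conv_rhs => rw [hρ.spectral_theorem]
  rfl

lemma Phi_herm (hρ : ρ.IsHermitian) (f : ℝ → ℝ) : (Phi hρ f)ᴴ = Phi hρ f := by
  unfold Phi
  rw [star_eq_conjTranspose]
  simp only [conjTranspose_mul, conjTranspose_conjTranspose, diagonal_conjTranspose]
  have : star (fun i => (f (hρ.eigenvalues i) : ℂ)) = (fun i => (f (hρ.eigenvalues i) : ℂ)) := by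
    funext i; simp [Pi.star_apply, Complex.star_def, Complex.conj_ofReal]
  rw [this, ← mul_assoc]

lemma Phi_psd (hρ : ρ.IsHermitian) (f : ℝ → ℝ) (hf : ∀ x, 0 ≤ f x) :
    (Phi hρ f).PosSemidef := by
  unfold Phi
  rw [star_eq_conjTranspose]
  exact (Matrix.PosSemidef.diagonal (fun i => by
    rw [Complex.le_def]
    simp [hf _])).mul_mul_conjTranspose_same _

lemma Phi_one (hρ : ρ.IsHermitian) : Phi hρ (fun _ => 1) = 1 := by
  unfold Phi
  simp only [Complex.ofReal_one, diagonal_one, mul_one]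
  exact (Matrix.mem_unitaryGroup_iff).mp (hρ.eigenvectorUnitary).2

lemma Phi_sub (hρ : ρ.IsHermitian) (f g : ℝ → ℝ) :
    Phi hρ f - Phi hρ g = Phi hρ (fun x => f x - g x) := by
  unfold Phi
  rw [← sub_mul, ← mul_sub, diagonal_sub]
  have : (diagonal fun i => ((f (hρ.eigenvalues i) : ℂ)) - ((g (hρ.eigenvalues i) : ℂ)))
      = diagonal fun i => (((f (hρ.eigenvalues i) - g (hρ.eigenvalues i)) : ℝ) : ℂ) := by
    congr 1; funext i; push_cast; ring
  rw [this]

end Phi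

section Polar
variable {n m : Type*} [Fintype n] [DecidableEq n] [Fintype m]

lemma exists_polar {ρ : Matrix n n ℂ} (hρ : ρ.PosSemidef) (A : Matrix n m ℂ)
    (hA : A * Aᴴ = ρ) : ∃ U : Matrix n m ℂ, A = msqrt ρ * U ∧ IsCon Uᴴ := by
  have hH : ρ.IsHermitian := hρ.1
  set sq : ℝ → ℝ := Real.sqrt with hsqdef
  set isq : ℝ → ℝ := fun x => (Real.sqrt x)⁻¹ with hisqdef
  have hev : ∀ i, 0 ≤ hH.eigenvalues i := hρ.eigenvalues_nonneg
  have hP : msqrt ρ = Phi hH sq := by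
    rw [msqrt_of_psd hρ]
    rfl
  have hid : Phi hH (fun x => x) = ρ := Phi_id hH
  set π : ℝ → ℝ := fun x => sq x * isq x with hπdef
  have hπx : ∀ i, π (hH.eigenvalues i) * (hH.eigenvalues i) = hH.eigenvalues i := by
    intro i
    rcases eq_or_lt_of_le (hev i) with h0 | h0
    · simp [π, sq, isq, ← h0]
    · have h : Real.sqrt (hH.eigenvalues i) ≠ 0 := ne_of_gt (Real.sqrt_pos.mpr h0)
      field_simp [π, sq, isq]
      exact mul_inv_cancel₀ h
  have hxπ : ∀ i, (hH.eigenvalues i) * π (hH.eigenvalues i) = hH.eigenvalues i := by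
    intro i; rw [mul_comm]; exact hπx i
  have hπρ : Phi hH π * ρ = ρ :=
    (congrArg (fun M => Phi hH π * M) hid.symm).trans
      ((Phi_mul hH π _).trans ((Phi_ext hH hπx).trans hid))
  have hρπ : ρ * Phi hH π = ρ :=
    (congrArg (fun M => M * Phi hH π) hid.symm).trans
      ((Phi_mul hH _ π).trans ((Phi_ext hH hxπ).trans hid))
  have hπA : Phi hH π * A = A := by
    have hMM : (Phi hH π * A - A) * (Phi hH π * A - A)ᴴ = 0 := by
      rw [conjTranspose_sub, conjTranspose_mul, Phi_herm]
      rw [Matrix.sub_mul, Matrix.mul_sub, Matrix.mul_sub]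
      have k1 : Phi hH π * A * (Aᴴ * Phi hH π) = ρ := by
        rw [← Matrix.mul_assoc (Phi hH π * A) Aᴴ (Phi hH π),
          Matrix.mul_assoc (Phi hH π) A Aᴴ, hA, hπρ, hρπ]
      have k2 : Phi hH π * A * Aᴴ = ρ := by rw [Matrix.mul_assoc, hA, hπρ]
      have k3 : A * (Aᴴ * Phi hH π) = ρ := by rw [← Matrix.mul_assoc, hA, hρπ]
      rw [k1, k2, k3, hA]
      simp
    have := Matrix.self_mul_conjTranspose_eq_zero.mp hMM
    rwa [sub_eq_zero] at this
  refine ⟨Phi hH isq * A, ?_, ?_⟩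
  · rw [hP, ← Matrix.mul_assoc, Phi_mul, ← hπdef, hπA]
  · have hiρ : Phi hH isq * ρ = Phi hH (fun x => isq x * x) :=
      (congrArg (fun M => Phi hH isq * M) hid.symm).trans (Phi_mul hH isq _)
    have hUU : (Phi hH isq * A) * (Phi hH isq * A)ᴴ = Phi hH (fun x => isq x * x * isq x) := by
      rw [conjTranspose_mul, Phi_herm, ← Matrix.mul_assoc (Phi hH isq * A) Aᴴ (Phi hH isq),
        Matrix.mul_assoc (Phi hH isq) A Aᴴ, hA, hiρ, Phi_mul]
    refine con_of_psd ?_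
    rw [conjTranspose_conjTranspose, hUU, ← Phi_one hH, Phi_sub]
    refine Phi_psd hH _ fun x => ?_
    rcases le_or_gt x 0 with h0 | h0
    · have h : Real.sqrt x = 0 := Real.sqrt_eq_zero'.mpr h0
      simp [isq, h]
    · have hx : Real.sqrt x ≠ 0 := ne_of_gt (Real.sqrt_pos.mpr h0)
      have h1 : isq x * x * isq x = 1 := by
        have hs : Real.sqrt x * Real.sqrt x = x := Real.mul_self_sqrt (le_of_lt h0)
        simp only [isq]
        rw [← hs]
        field_simp
        rw [Real.sqrt_sq (Real.sqrt_nonneg x)]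
      rw [h1]; norm_num

end Polar

section Uhlmann
variable {n m : Type*} [Fintype n] [DecidableEq n] [Fintype m] [DecidableEq m]

lemma trace_self_mul_conjTranspose (G : Matrix n m ℂ) :
    (G * Gᴴ).trace = ((∑ i, ∑ k, Complex.normSq (G i k) : ℝ) : ℂ) := by
  rw [Matrix.trace]
  push_cast
  refine Finset.sum_congr rfl fun i _ => ?_
  rw [Matrix.diag_apply, Matrix.mul_apply]
  refine Finset.sum_congr rfl fun k _ => ?_
  rw [Matrix.conjTranspose_apply, Complex.star_def, Complex.normSq_eq_conj_mul_self]
  ring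

lemma trace_conj_le {S : Matrix n n ℂ} (hS : S.PosSemidef) {Y : Matrix n n ℂ}
    (hY : IsCon Y) : ‖(msqrt S * Y * msqrt S).trace‖ ≤ S.trace.re := by
  set R := msqrt S with hRdef
  have hRpsd := msqrt_posSemidef hS
  have hRh : Rᴴ = R := msqrt_herm hS
  have hdiag : ∀ i, (R * Y * R) i i = star (fun j => R j i) ⬝ᵥ (Y *ᵥ (fun j => R j i)) := by
    intro i
    rw [Matrix.mul_assoc, Matrix.mul_apply]
    refine Finset.sum_congr rfl fun j _ => ?_
    have h1 : R i j = star (R j i) := by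
      conv_lhs => rw [← hRh, Matrix.conjTranspose_apply]
    rw [h1, Matrix.mul_apply]
    rfl
  have hbound : ∀ i, ‖(R * Y * R) i i‖ ≤ ∑ j, Complex.normSq (R j i) := by
    intro i
    rw [hdiag i]
    refine le_trans (cs_dot _ _) ?_
    have h2 : Real.sqrt (∑ j, Complex.normSq ((Y *ᵥ (fun j => R j i)) j))
        ≤ Real.sqrt (∑ j, Complex.normSq (R j i)) := Real.sqrt_le_sqrt (hY _)
    refine le_trans (mul_le_mul_of_nonneg_left h2 (Real.sqrt_nonneg _)) ?_
    rw [Real.mul_self_sqrt (Finset.sum_nonneg fun j _ => Complex.normSq_nonneg _)]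
  have htr : S.trace.re = ∑ i, ∑ j, Complex.normSq (R j i) := by
    have : S.trace = (R * Rᴴ).trace := by rw [hRh, msqrt_mul_self hS]
    rw [this, trace_self_mul_conjTranspose, Complex.ofReal_re, Finset.sum_comm]
  rw [htr, Matrix.trace]
  refine le_trans (norm_sum_le _ _) (Finset.sum_le_sum fun i _ => ?_)
  exact hbound i

lemma uhlmann (A B : Matrix n m ℂ) :
    ‖(Aᴴ * B).trace‖ ≤ fid (A * Aᴴ) (B * Bᴴ) := by
  have hρ : (A * Aᴴ).PosSemidef := Matrix.posSemidef_self_mul_conjTranspose A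
  have hσ : (B * Bᴴ).PosSemidef := Matrix.posSemidef_self_mul_conjTranspose B
  set P := msqrt (A * Aᴴ) with hPdef
  set Q := msqrt (B * Bᴴ) with hQdef
  obtain ⟨U, hAU, hUconT⟩ := exists_polar hρ A rfl
  obtain ⟨W, hBW, hWconT⟩ := exists_polar hσ B rfl
  set X := Q * P with hXdef
  have hXh : Xᴴ = P * Q := by
    rw [hXdef, Matrix.conjTranspose_mul, msqrt_herm hρ, msqrt_herm hσ]
  have hT : (Xᴴ * X).PosSemidef := Matrix.posSemidef_conjTranspose_mul_self X
  have hfid : fid (A * Aᴴ) (B * Bᴴ) = (msqrt (Xᴴ * X)).trace.re := by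
    have e : msqrt (A * Aᴴ) * (B * Bᴴ) * msqrt (A * Aᴴ) = Xᴴ * X := by
      rw [hXh, hXdef, ← msqrt_mul_self hσ]
      simp only [← hPdef, ← hQdef, Matrix.mul_assoc]
    unfold fid
    rw [e]
  obtain ⟨U₀, hXU, hU0conT⟩ := exists_polar hT Xᴴ (by rw [Matrix.conjTranspose_conjTranspose])
  have hU0 : IsCon U₀ := by
    have := con_conjTranspose hU0conT
    rwa [Matrix.conjTranspose_conjTranspose] at this
  have hW : IsCon W := by
    have := con_conjTranspose hWconT
    rwa [Matrix.conjTranspose_conjTranspose] at this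
  set S := msqrt (Xᴴ * X) with hSdef
  have hSpsd : S.PosSemidef := msqrt_posSemidef hT
  set R₂ := msqrt S with hR2def
  have htr : (Aᴴ * B).trace = (R₂ * (U₀ * W * Uᴴ) * R₂).trace := by
    have e1 : Aᴴ * B = Uᴴ * (S * (U₀ * W)) := by
      rw [hAU, hBW, Matrix.conjTranspose_mul, msqrt_herm hρ]
      calc Uᴴ * P * (Q * W) = Uᴴ * ((P * Q) * W) := by
            simp only [Matrix.mul_assoc]
        _ = Uᴴ * (S * (U₀ * W)) := by rw [← hXh, hXU, Matrix.mul_assoc]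
    have e2 : S = R₂ * R₂ := (msqrt_mul_self hSpsd).symm
    calc (Aᴴ * B).trace = ((S * (U₀ * W)) * Uᴴ).trace := by
          rw [e1, Matrix.trace_mul_comm]
      _ = (R₂ * (R₂ * (U₀ * W) * Uᴴ)).trace := by
          rw [e2]; simp only [Matrix.mul_assoc]
      _ = ((R₂ * (U₀ * W) * Uᴴ) * R₂).trace := Matrix.trace_mul_comm _ _
      _ = (R₂ * (U₀ * W * Uᴴ) * R₂).trace := by simp only [Matrix.mul_assoc]
  rw [htr, hfid]
  exact trace_conj_le hSpsd (con_mul (con_mul hU0 hW) hUconT)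

end Uhlmann

section PSDCS
variable {n : Type*} [Fintype n] [DecidableEq n]

lemma bilinform_eq {m : Type*} [Fintype m] (Y : Matrix m n ℂ) (φ ψ : n → ℂ) :
    star φ ⬝ᵥ ((Yᴴ * Y) *ᵥ ψ) = star (Y *ᵥ φ) ⬝ᵥ (Y *ᵥ ψ) := by
  rw [← Matrix.mulVec_mulVec, Matrix.dotProduct_mulVec, ← Matrix.star_mulVec]

lemma psd_cs {Q : Matrix n n ℂ} (hQ : Q.PosSemidef) (φ ψ : n → ℂ) :
    ‖star φ ⬝ᵥ (Q *ᵥ ψ)‖ ≤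
      Real.sqrt (star φ ⬝ᵥ (Q *ᵥ φ)).re * Real.sqrt (star ψ ⬝ᵥ (Q *ᵥ ψ)).re := by
  obtain ⟨R, hR⟩ : ∃ R : Matrix n n ℂ, Q = Rᴴ * R :=
    ⟨msqrt Q, by rw [msqrt_herm hQ, msqrt_mul_self hQ]⟩
  subst hR
  rw [bilinform_eq, bilinform_eq, bilinform_eq, star_dot_self, star_dot_self,
    Complex.ofReal_re, Complex.ofReal_re]
  exact cs_dot _ _

lemma psd_trace_re_nonneg {M : Matrix n n ℂ} (hM : M.PosSemidef) : 0 ≤ M.trace.re := by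
  rw [Matrix.trace, Complex.re_sum]
  refine Finset.sum_nonneg fun i _ => ?_
  have h := hM.dotProduct_mulVec_nonneg (Pi.single i 1)
  have e : star (Pi.single i 1) ⬝ᵥ (M *ᵥ Pi.single i 1) = M.diag i := by
    simp [Matrix.mulVec_single, dotProduct, Pi.single_apply, Finset.sum_ite_eq,
      Matrix.diag_apply]
  rw [e] at h
  exact (Complex.le_def.mp h).1

end PSDCS

lemma sum_perm4 {M : Type*} [AddCommMonoid M] {ι₁ ι₂ ι₃ ι₄ : Type*} [Fintype ι₁] [Fintype ι₂]
    [Fintype ι₃] [Fintype ι₄] (f : ι₁ → ι₂ → ι₃ → ι₄ → M) :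
    ∑ k, ∑ c, ∑ a, ∑ b, f k c a b = ∑ a, ∑ b, ∑ c, ∑ k, f k c a b := by
  rw [Finset.sum_comm]
  refine Eq.trans (Finset.sum_congr rfl fun c _ => Finset.sum_comm) ?_
  rw [Finset.sum_comm]
  refine Finset.sum_congr rfl fun a _ => ?_
  refine Eq.trans (Finset.sum_congr rfl fun c _ => Finset.sum_comm) ?_
  rw [Finset.sum_comm]

section Main
variable {d : ℕ} (E : Matrix (Fin d) (Fin d) ℂ →ₗ[ℂ] Matrix (Fin d) (Fin d) ℂ)

noncomputable def AA (φ : Fin d → ℂ) : Matrix (Fin d) (Fin d × Fin d) ℂ :=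
  Matrix.of fun c k => ∑ a, φ a * (msqrt (choi E)) (a, c) k

lemma outer_eq_sum (φ : Fin d → ℂ) :
    outer φ = ∑ a : Fin d, ∑ b : Fin d, (φ a * star (φ b)) • Matrix.single a b (1:ℂ) := by
  ext i j
  simp [outer, Matrix.sum_apply, Matrix.single, ite_and, Finset.sum_ite_eq,
    Finset.sum_ite_eq']

lemma E_outer_entry (φ : Fin d → ℂ) (c e : Fin d) :
    E (outer φ) c e = ∑ a, ∑ b, φ a * star (φ b) * choi E (a,c) (b,e) := by
  rw [outer_eq_sum, map_sum]
  simp only [map_sum, _root_.map_smul, Matrix.sum_apply, Matrix.smul_apply, smul_eq_mul]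
  rfl

lemma choi_entry (hc : (choi E).PosSemidef) (p q : Fin d × Fin d) :
    choi E p q = ∑ k, msqrt (choi E) p k * star (msqrt (choi E) q k) := by
  conv_lhs => rw [← msqrt_mul_self hc]
  rw [Matrix.mul_apply]
  refine Finset.sum_congr rfl fun k _ => ?_
  congr 1
  rw [← Matrix.conjTranspose_apply, msqrt_herm hc]

lemma AA_mul_conjT (hc : (choi E).PosSemidef) (φ : Fin d → ℂ) :
    AA E φ * (AA E φ)ᴴ = E (outer φ) := by
  ext c e
  rw [Matrix.mul_apply, E_outer_entry]
  simp only [AA, Matrix.conjTranspose_apply, Matrix.of_apply, star_sum, star_mul']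
  calc ∑ k, (∑ a, φ a * msqrt (choi E) (a, c) k) * (∑ b, star (φ b) * star (msqrt (choi E) (b, e) k))
      = ∑ k, ∑ a, ∑ b, φ a * star (φ b) * (msqrt (choi E) (a,c) k * star (msqrt (choi E) (b,e) k)) := by
        refine Finset.sum_congr rfl fun k _ => ?_
        rw [Finset.sum_mul_sum]
        refine Finset.sum_congr rfl fun a _ => Finset.sum_congr rfl fun b _ => by ring
    _ = ∑ a, ∑ b, ∑ k, φ a * star (φ b) * (msqrt (choi E) (a,c) k * star (msqrt (choi E) (b,e) k)) := by
        rw [Finset.sum_comm]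
        exact Finset.sum_congr rfl fun a _ => Finset.sum_comm
    _ = ∑ a, ∑ b, φ a * star (φ b) * choi E (a,c) (b,e) := by
        refine Finset.sum_congr rfl fun a _ => Finset.sum_congr rfl fun b _ => ?_
        rw [choi_entry E hc, Finset.mul_sum]

lemma AA_trace (hc : (choi E).PosSemidef) (φ ψ : Fin d → ℂ) :
    ((AA E φ)ᴴ * AA E ψ).trace = ∑ a, ∑ b, ∑ c, star (φ a) * ψ b * choi E (b,c) (a,c) := by
  rw [Matrix.trace]
  simp only [Matrix.diag_apply, Matrix.mul_apply, AA, Matrix.conjTranspose_apply,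
    Matrix.of_apply, star_sum, star_mul']
  calc ∑ k, ∑ c, (∑ a, star (φ a) * star (msqrt (choi E) (a, c) k)) * (∑ b, ψ b * msqrt (choi E) (b, c) k)
      = ∑ k, ∑ c, ∑ a, ∑ b, star (φ a) * ψ b * (msqrt (choi E) (b,c) k * star (msqrt (choi E) (a,c) k)) := by
        refine Finset.sum_congr rfl fun k _ => Finset.sum_congr rfl fun c _ => ?_
        rw [Finset.sum_mul_sum]
        refine Finset.sum_congr rfl fun a _ => Finset.sum_congr rfl fun b _ => by ring
    _ = ∑ a, ∑ b, ∑ c, ∑ k, star (φ a) * ψ b * (msqrt (choi E) (b,c) k * star (msqrt (choi E) (a,c) k)) :=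
        sum_perm4 _
    _ = ∑ a, ∑ b, ∑ c, star (φ a) * ψ b * choi E (b,c) (a,c) := by
        refine Finset.sum_congr rfl fun a _ => Finset.sum_congr rfl fun b _ =>
          Finset.sum_congr rfl fun c _ => ?_
        rw [choi_entry E hc, Finset.mul_sum]
end Main

lemma outer_psd {n : Type*} [Fintype n] [DecidableEq n] (φ : n → ℂ) : (outer φ).PosSemidef := by
  have h : outer φ = (Matrix.of fun i (_ : Fin 1) => φ i) * (Matrix.of fun i (_ : Fin 1) => φ i)ᴴ := by
    ext i j
    simp [outer, Matrix.mul_apply, Matrix.conjTranspose_apply, Fin.sum_univ_one]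
  rw [h]
  exact Matrix.posSemidef_self_mul_conjTranspose _

lemma outer_trace {n : Type*} [Fintype n] (φ : n → ℂ) :
    (outer φ).trace = ((∑ i, Complex.normSq (φ i) : ℝ) : ℂ) := by
  rw [Matrix.trace]
  push_cast
  refine Finset.sum_congr rfl fun i _ => ?_
  simp only [Matrix.diag_apply, outer, Matrix.of_apply, Complex.star_def]
  exact Complex.mul_conj (φ i)

set_option maxHeartbeats 1000000 in
theorem prob_bound_mixed_targets {d : ℕ} (ψp ψm : Fin d → ℂ)
    (hψp : ∑ i, Complex.normSq (ψp i) = 1) (hψm : ∑ i, Complex.normSq (ψm i) = 1)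
    (ρp ρm : Matrix (Fin d) (Fin d) ℂ) (hρp : ρp.PosSemidef) (hρm : ρm.PosSemidef)
    (htp : ρp.trace = 1) (htm : ρm.trace = 1)
    (E : Matrix (Fin d) (Fin d) ℂ →ₗ[ℂ] Matrix (Fin d) (Fin d) ℂ) (hE : IsQuantumOp E)
    (pp pm : ℝ) (hpp : 0 < pp) (hpm : 0 < pm)
    (hEp : E (outer ψp) = (pp : ℂ) • ρp)
    (hEm : E (outer ψm) = (pm : ℂ) • ρm)
    (hov : fid ρp ρm < ‖dot ψp ψm‖) :
    min pp pm ≤ (1 - ‖dot ψp ψm‖) / (1 - fid ρp ρm) := by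
  obtain ⟨hc, htrE⟩ := hE
  set N : Matrix (Fin d) (Fin d) ℂ := Matrix.of fun a b => ∑ c, choi E (b,c) (a,c) with hNdef
  -- N-form equals trace of AA products
  have hNform : ∀ φ ψ : Fin d → ℂ, star φ ⬝ᵥ (N *ᵥ ψ) = ((AA E φ)ᴴ * AA E ψ).trace := by
    intro φ ψ
    rw [AA_trace E hc]
    simp only [dotProduct, Matrix.mulVec, dotProduct, hNdef, Matrix.of_apply,
      Pi.star_apply]
    refine Finset.sum_congr rfl fun a _ => ?_
    rw [Finset.mul_sum]
    refine Finset.sum_congr rfl fun b _ => ?_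
    rw [Finset.sum_mul, Finset.mul_sum]
    refine Finset.sum_congr rfl fun c _ => by ring
  -- trace of E(outer x)
  have hEtr : ∀ x : Fin d → ℂ, (E (outer x)).trace =
      ((∑ c, ∑ k, Complex.normSq (AA E x c k) : ℝ) : ℂ) := by
    intro x
    rw [← AA_mul_conjT E hc, trace_self_mul_conjTranspose]
  have hNquad : ∀ x : Fin d → ℂ, star x ⬝ᵥ (N *ᵥ x) = (E (outer x)).trace := by
    intro x
    rw [hNform, Matrix.trace_mul_comm, AA_mul_conjT E hc]
  -- Q = 1 - N is PSD
  have hNherm : N.IsHermitian := by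
    refine Matrix.IsHermitian.ext fun a b => ?_
    simp only [hNdef, Matrix.of_apply, star_sum]
    refine Finset.sum_congr rfl fun c _ => ?_
    rw [← Matrix.conjTranspose_apply, hc.1]
  have hQpsd : (1 - N).PosSemidef := by
    refine Matrix.PosSemidef.of_dotProduct_mulVec_nonneg ?_ ?_
    · exact Matrix.IsHermitian.sub Matrix.isHermitian_one hNherm
    · intro x
      rw [Matrix.sub_mulVec, dotProduct_sub, Matrix.one_mulVec, star_dot_self,
        hNquad, hEtr, ← Complex.ofReal_sub]
      rw [Complex.zero_le_real]
      have h1 : (E (outer x)).trace.re ≤ (outer x).trace.re := htrE _ (outer_psd x)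
      rw [hEtr, outer_trace, Complex.ofReal_re, Complex.ofReal_re] at h1
      linarith
  -- probabilities
  have hEtrp : (E (outer ψp)).trace = (pp : ℂ) := by
    rw [hEp, Matrix.trace_smul, htp, smul_eq_mul, mul_one]
  have hEtrm : (E (outer ψm)).trace = (pm : ℂ) := by
    rw [hEm, Matrix.trace_smul, htm, smul_eq_mul, mul_one]
  have hpple : pp ≤ 1 := by
    have h1 : (E (outer ψp)).trace.re ≤ (outer ψp).trace.re := htrE _ (outer_psd ψp)
    rw [hEtrp, outer_trace, hψp, Complex.ofReal_re, Complex.ofReal_re] at h1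
    linarith
  have hpmle : pm ≤ 1 := by
    have h1 : (E (outer ψm)).trace.re ≤ (outer ψm).trace.re := htrE _ (outer_psd ψm)
    rw [hEtrm, outer_trace, hψm, Complex.ofReal_re, Complex.ofReal_re] at h1
    linarith
  -- CS bound on the Q-part
  have hQp : (star ψp ⬝ᵥ ((1 - N) *ᵥ ψp)).re = 1 - pp := by
    rw [Matrix.sub_mulVec, dotProduct_sub, Matrix.one_mulVec, star_dot_self,
      hNquad, hEtrp, hψp]
    simp
  have hQm : (star ψm ⬝ᵥ ((1 - N) *ᵥ ψm)).re = 1 - pm := by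
    rw [Matrix.sub_mulVec, dotProduct_sub, Matrix.one_mulVec, star_dot_self,
      hNquad, hEtrm, hψm]
    simp
  have hQbound : ‖star ψp ⬝ᵥ ((1 - N) *ᵥ ψm)‖ ≤
      Real.sqrt (1 - pp) * Real.sqrt (1 - pm) := by
    have := psd_cs hQpsd ψp ψm
    rwa [hQp, hQm] at this
  -- Uhlmann bound on the N-part
  set sp := Real.sqrt pp with hspdef
  set sm := Real.sqrt pm with hsmdef
  have hsp0 : 0 < sp := Real.sqrt_pos.mpr hpp
  have hsm0 : 0 < sm := Real.sqrt_pos.mpr hpm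
  have hsp2 : sp * sp = pp := Real.mul_self_sqrt hpp.le
  have hsm2 : sm * sm = pm := Real.mul_self_sqrt hpm.le
  set Ap' : Matrix (Fin d) (Fin d × Fin d) ℂ := ((sp⁻¹ : ℝ) : ℂ) • AA E ψp with hApdef
  set Am' : Matrix (Fin d) (Fin d × Fin d) ℂ := ((sm⁻¹ : ℝ) : ℂ) • AA E ψm with hAmdef
  have hscal : ∀ s : ℝ, (star ((s : ℂ)) : ℂ) = (s : ℂ) := fun s => by
    rw [Complex.star_def, Complex.conj_ofReal]
  have hApAp : Ap' * Ap'ᴴ = ρp := by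
    rw [hApdef, Matrix.conjTranspose_smul, Matrix.smul_mul, Matrix.mul_smul, smul_smul,
      AA_mul_conjT E hc, hEp, smul_smul, hscal]
    have : ((sp⁻¹ : ℝ) : ℂ) * ((sp⁻¹ : ℝ) : ℂ) * (pp : ℂ) = 1 := by
      rw [← Complex.ofReal_mul, ← Complex.ofReal_mul, ← Complex.ofReal_one]
      congr 1
      field_simp
      nlinarith [hsp2]
    rw [this, one_smul]
  have hAmAm : Am' * Am'ᴴ = ρm := by
    rw [hAmdef, Matrix.conjTranspose_smul, Matrix.smul_mul, Matrix.mul_smul, smul_smul,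
      AA_mul_conjT E hc, hEm, smul_smul, hscal]
    have : ((sm⁻¹ : ℝ) : ℂ) * ((sm⁻¹ : ℝ) : ℂ) * (pm : ℂ) = 1 := by
      rw [← Complex.ofReal_mul, ← Complex.ofReal_mul, ← Complex.ofReal_one]
      congr 1
      field_simp
      nlinarith [hsm2]
    rw [this, one_smul]
  have hUh : ‖(Ap'ᴴ * Am').trace‖ ≤ fid ρp ρm := by
    have := uhlmann Ap' Am'
    rwa [hApAp, hAmAm] at this
  have htrscale : ((AA E ψp)ᴴ * AA E ψm).trace = ((sp * sm : ℝ) : ℂ) * (Ap'ᴴ * Am').trace := by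
    rw [hApdef, hAmdef, Matrix.conjTranspose_smul, Matrix.smul_mul, Matrix.mul_smul,
      smul_smul, Matrix.trace_smul, hscal, smul_eq_mul, ← mul_assoc]
    have : ((sp * sm : ℝ) : ℂ) * (((sp⁻¹ : ℝ) : ℂ) * ((sm⁻¹ : ℝ) : ℂ)) = 1 := by
      rw [← Complex.ofReal_mul, ← Complex.ofReal_mul, ← Complex.ofReal_one]
      congr 1
      field_simp
    rw [this, one_mul]
  have hNbound : ‖star ψp ⬝ᵥ (N *ᵥ ψm)‖ ≤ sp * sm * fid ρp ρm := by
    rw [hNform, htrscale, norm_mul, Complex.norm_real, Real.norm_eq_abs,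
      abs_of_nonneg (by positivity : (0:ℝ) ≤ sp * sm)]
    exact mul_le_mul_of_nonneg_left hUh (by positivity)
  -- overlap decomposition
  have hdot : dot ψp ψm = star ψp ⬝ᵥ (N *ᵥ ψm) + star ψp ⬝ᵥ ((1 - N) *ᵥ ψm) := by
    rw [Matrix.sub_mulVec, dotProduct_sub, Matrix.one_mulVec]
    have : dot ψp ψm = star ψp ⬝ᵥ ψm := by
      simp [dot, dotProduct]
    rw [this]
    ring
  have hovle : ‖dot ψp ψm‖ ≤
      sp * sm * fid ρp ρm + Real.sqrt (1 - pp) * Real.sqrt (1 - pm) := by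
    rw [hdot]
    exact le_trans (norm_add_le _ _) (add_le_add hNbound hQbound)
  -- scalar endgame
  have hov1 : ‖dot ψp ψm‖ ≤ 1 := by
    have h1 : dot ψp ψm = star ψp ⬝ᵥ ψm := by simp [dot, dotProduct]
    rw [h1]
    have := cs_dot ψp ψm
    rwa [hψp, hψm, Real.sqrt_one, mul_one] at this
  set F := fid ρp ρm with hFdef
  set ov := ‖dot ψp ψm‖ with hovdef
  set u := Real.sqrt (1 - pp) with hudef
  set v := Real.sqrt (1 - pm) with hvdef
  have hu0 : 0 ≤ u := Real.sqrt_nonneg _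
  have hv0 : 0 ≤ v := Real.sqrt_nonneg _
  have hu2 : u * u = 1 - pp := Real.mul_self_sqrt (by linarith)
  have hv2 : v * v = 1 - pm := Real.mul_self_sqrt (by linarith)
  have hcs1 : sp * sm + u * v ≤ 1 := by
    nlinarith [sq_nonneg (sp * v - sm * u), sq_nonneg (sp * sm + u * v - 1),
      sq_nonneg (sp * sm + u * v), mul_nonneg (mul_nonneg hsp0.le hsm0.le) (mul_nonneg hu0 hv0)]
  have hden : 0 < 1 - F := by
    have := lt_of_lt_of_le hov hov1
    linarith
  have hkey : sp * sm * (1 - F) ≤ 1 - ov := by nlinarith [hovle, hcs1]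
  have hmin : min pp pm ≤ sp * sm := by
    rcases le_total pp pm with h | h
    · rw [min_eq_left h]
      calc pp = sp * sp := hsp2.symm
        _ ≤ sp * sm := mul_le_mul_of_nonneg_left (Real.sqrt_le_sqrt h) hsp0.le
    · rw [min_eq_right h]
      calc pm = sm * sm := hsm2.symm
        _ ≤ sp * sm := mul_le_mul_of_nonneg_right (Real.sqrt_le_sqrt h) hsm0.le
  calc min pp pm ≤ sp * sm := hmin
    _ ≤ (1 - ov) / (1 - F) := (le_div_iff₀ hden).mpr hkey
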